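/- Let f be an L(1,2)-edge labeling of the 86-edge graph G such that the 26 edges of H receive pairwise distinct labels whose set is exactly {0,1,...,25}. Then for each fork F_u, at most two of the three labels of the edges of F_u are each the label of three edges of G not in H; moreover, if two labels of edges of F_u are each the label of three edges of G not in H, then these two labels are consecutive integers and one of them equals 0 or 25. -/

import Mathlib

/-- The infinite octagonal grid `T8` (the king graph on `ℤ × ℤ`). -/
def T8 : SimpleGraph (ℤ × ℤ) where
  Adj u v := u ≠ v ∧ |u.1 - v.1| ≤ 1 ∧ |u.2 - v.2| ≤ 1
  symm := ⟨by
    intro u v h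
    refine ⟨h.1.symm, ?_, ?_⟩
    · rw [abs_sub_comm]; exact h.2.1
    · rw [abs_sub_comm]; exact h.2.2⟩
  loopless := ⟨fun u h => h.1 rfl⟩

/-- `f` is an L(1,2)-edge labeling of `G`. -/
def IsL12 {V : Type*} (G : SimpleGraph V) (f : Sym2 V → ℕ) : Prop :=
  (∀ e1 ∈ G.edgeSet, ∀ e2 ∈ G.edgeSet, e1 ≠ e2 → (∃ v, v ∈ e1 ∧ v ∈ e2) →
    f e1 ≠ f e2) ∧
  (∀ e1 ∈ G.edgeSet, ∀ e2 ∈ G.edgeSet, e1 ≠ e2 → ¬ (∃ v, v ∈ e1 ∧ v ∈ e2) →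
    (∃ e3 ∈ G.edgeSet, (∃ v, v ∈ e1 ∧ v ∈ e3) ∧ (∃ v, v ∈ e2 ∧ v ∈ e3)) →
    2 ≤ |(f e1 : ℤ) - (f e2 : ℤ)|)

/-- The 2×2 block `B` of vertices of `T8`. -/
def BVerts : Set (ℤ × ℤ) := {(0,0), (1,0), (0,1), (1,1)}

/-- The 4×4 block `{-1,0,1,2} × {-1,0,1,2}` of vertices of `T8`. -/
def Blk4 : Set (ℤ × ℤ) := {p | p.1 ∈ Set.Icc (-1 : ℤ) 2 ∧ p.2 ∈ Set.Icc (-1 : ℤ) 2}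

/-- The 86-edge subgraph `G` of `T8`: all edges of `T8` incident to a vertex of the
4×4 block. -/
def G8 : SimpleGraph (ℤ × ℤ) where
  Adj u w := T8.Adj u w ∧ (u ∈ Blk4 ∨ w ∈ Blk4)
  symm := ⟨fun u w h => ⟨T8.symm.symm _ _ h.1, h.2.symm⟩⟩
  loopless := ⟨fun u h => T8.loopless.irrefl u h.1⟩

/-- The 26 edges of the subgraph `H` of `T8`: all edges of `T8` incident to a vertex
of the 2×2 block `B`. -/
def HEdges : Set (Sym2 (ℤ × ℤ)) := {e | e ∈ G8.edgeSet ∧ ∃ u ∈ e, u ∈ BVerts}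

/-- The fork `F_u` at a vertex `u` of `B`: the 3 edges joining `u` to its three
neighbours in the outward corner direction. -/
def Fork (u : ℤ × ℤ) : Set (Sym2 (ℤ × ℤ)) :=
  {s(u, (3 * u.1 - 1, u.2)), s(u, (3 * u.1 - 1, 3 * u.2 - 1)), s(u, (u.1, 3 * u.2 - 1))}

/-- The 12 fork edges of `H`. -/
def ForkEdges : Set (Sym2 (ℤ × ℤ)) := ⋃ u ∈ BVerts, Fork u

/-- The label `c` is used on (at least) three edges of `G` outside `H`. -/
def ThriceOutside (f : Sym2 (ℤ × ℤ) → ℕ) (c : ℕ) : Prop :=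
  ∃ e1 e2 e3,
    e1 ∈ G8.edgeSet \ HEdges ∧ e2 ∈ G8.edgeSet \ HEdges ∧ e3 ∈ G8.edgeSet \ HEdges ∧
    e1 ≠ e2 ∧ e1 ≠ e3 ∧ e2 ≠ e3 ∧ f e1 = c ∧ f e2 = c ∧ f e3 = c


/-! ### Auxiliary machinery -/

section Aux

abbrev pe (p : (ℤ×ℤ)×(ℤ×ℤ)) : Sym2 (ℤ×ℤ) := s(p.1, p.2)

def InB4 (p : ℤ×ℤ) : Prop := -1 ≤ p.1 ∧ p.1 ≤ 2 ∧ -1 ≤ p.2 ∧ p.2 ≤ 2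

def AdjP (a b : ℤ×ℤ) : Prop :=
  a ≠ b ∧ -1 ≤ a.1 - b.1 ∧ a.1 - b.1 ≤ 1 ∧ -1 ≤ a.2 - b.2 ∧ a.2 - b.2 ≤ 1 ∧
    (InB4 a ∨ InB4 b)

instance : DecidablePred InB4 := fun p => by unfold InB4; infer_instance
instance (a b : ℤ×ℤ) : Decidable (AdjP a b) := by unfold AdjP; infer_instance

lemma adjP_iff (a b : ℤ×ℤ) : G8.Adj a b ↔ AdjP a b := by
  show ((a ≠ b ∧ |a.1 - b.1| ≤ 1 ∧ |a.2 - b.2| ≤ 1) ∧ (a ∈ Blk4 ∨ b ∈ Blk4)) ↔ _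
  unfold AdjP InB4 Blk4
  simp only [Set.mem_Icc, Set.mem_setOf_eq, abs_le]
  constructor
  · rintro ⟨⟨h1, h2, h3⟩, h4⟩
    exact ⟨h1, h2.1, h2.2, h3.1, h3.2, by tauto⟩
  · rintro ⟨h1, h2, h3, h4, h5, h6⟩
    exact ⟨⟨h1, ⟨h2, h3⟩, ⟨h4, h5⟩⟩, by tauto⟩

lemma adjP_symm {a b : ℤ×ℤ} (h : AdjP a b) : AdjP b a := by
  obtain ⟨h1, h2, h3, h4, h5, h6⟩ := h
  exact ⟨h1.symm, by omega, by omega, by omega, by omega, h6.symm⟩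

def BP (p : ℤ×ℤ) : Prop := p = (0,0) ∨ p = (1,0) ∨ p = (0,1) ∨ p = (1,1)

instance : DecidablePred BP := fun p => by unfold BP; infer_instance

lemma BP_iff (p : ℤ×ℤ) : p ∈ BVerts ↔ BP p := by
  simp [BVerts, BP]

lemma memB_iff (a b : ℤ×ℤ) : (∃ u ∈ s(a,b), u ∈ BVerts) ↔ (BP a ∨ BP b) := by
  constructor
  · rintro ⟨u, hu, hB⟩
    rw [Sym2.mem_iff] at hu
    rcases hu with rfl | rfl
    exacts [Or.inl ((BP_iff u).mp hB), Or.inr ((BP_iff u).mp hB)]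
  · rintro (h | h)
    exacts [⟨a, Sym2.mem_mk_left a b, (BP_iff a).mpr h⟩,
            ⟨b, Sym2.mem_mk_right a b, (BP_iff b).mpr h⟩]

def HP (p : (ℤ×ℤ)×(ℤ×ℤ)) : Prop := AdjP p.1 p.2 ∧ (BP p.1 ∨ BP p.2)

instance : DecidablePred HP := fun p => by unfold HP; infer_instance

lemma mem_HEdges_iff (a b : ℤ×ℤ) : s(a,b) ∈ HEdges ↔ HP (a, b) := by
  unfold HEdges HP
  rw [Set.mem_setOf_eq, SimpleGraph.mem_edgeSet, adjP_iff, memB_iff]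

/-- Two edges are "close" (at distance at most 2 in `G8`, or equal). -/
def Close (x y : Sym2 (ℤ×ℤ)) : Prop :=
  ∃ v1 ∈ x, ∃ v2 ∈ y, v1 = v2 ∨ G8.Adj v1 v2

def RelV (a b : ℤ×ℤ) : Prop := a = b ∨ AdjP a b

def CloseP (p q : (ℤ×ℤ)×(ℤ×ℤ)) : Prop :=
  RelV p.1 q.1 ∨ RelV p.1 q.2 ∨ RelV p.2 q.1 ∨ RelV p.2 q.2

def ShareP (p q : (ℤ×ℤ)×(ℤ×ℤ)) : Prop :=
  p.1 = q.1 ∨ p.1 = q.2 ∨ p.2 = q.1 ∨ p.2 = q.2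

def D2P (p q : (ℤ×ℤ)×(ℤ×ℤ)) : Prop := CloseP p q ∧ ¬ ShareP p q

instance (a b : ℤ×ℤ) : Decidable (RelV a b) := by unfold RelV; infer_instance
instance (p q : (ℤ×ℤ)×(ℤ×ℤ)) : Decidable (CloseP p q) := by unfold CloseP; infer_instance
instance (p q : (ℤ×ℤ)×(ℤ×ℤ)) : Decidable (ShareP p q) := by unfold ShareP; infer_instance
instance (p q : (ℤ×ℤ)×(ℤ×ℤ)) : Decidable (D2P p q) := by unfold D2P; infer_instance

lemma closeP_iff (p q : (ℤ×ℤ)×(ℤ×ℤ)) : Close (pe p) (pe q) ↔ CloseP p q := by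
  obtain ⟨a, b⟩ := p; obtain ⟨c, d⟩ := q
  unfold Close CloseP RelV
  simp only [pe, Sym2.mem_iff, adjP_iff]
  constructor
  · rintro ⟨v1, (rfl | rfl), v2, (rfl | rfl), h⟩ <;> tauto
  · rintro (h | h | h | h)
    exacts [⟨a, Or.inl rfl, c, Or.inl rfl, h⟩, ⟨a, Or.inl rfl, d, Or.inr rfl, h⟩,
            ⟨b, Or.inr rfl, c, Or.inl rfl, h⟩, ⟨b, Or.inr rfl, d, Or.inr rfl, h⟩]

lemma shareP_iff (p q : (ℤ×ℤ)×(ℤ×ℤ)) :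
    (∃ v, v ∈ pe p ∧ v ∈ pe q) ↔ ShareP p q := by
  obtain ⟨a, b⟩ := p; obtain ⟨c, d⟩ := q
  unfold ShareP
  simp only [pe, Sym2.mem_iff]
  constructor
  · rintro ⟨v, (rfl | rfl), (rfl | rfl)⟩ <;> tauto
  · rintro (h | h | h | h)
    exacts [⟨a, Or.inl rfl, Or.inl h⟩, ⟨a, Or.inl rfl, Or.inr h⟩,
            ⟨b, Or.inr rfl, Or.inl h⟩, ⟨b, Or.inr rfl, Or.inr h⟩]

section Rules
variable {f : Sym2 (ℤ×ℤ) → ℕ} (hf : IsL12 G8 f)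

include hf in
lemma rule_eq {x y : Sym2 (ℤ×ℤ)} (hx : x ∈ G8.edgeSet) (hy : y ∈ G8.edgeSet)
    (hne : x ≠ y) (hl : f x = f y) : ¬ Close x y := by
  rintro ⟨v1, hv1, v2, hv2, hc⟩
  by_cases hsh : ∃ v, v ∈ x ∧ v ∈ y
  · exact hf.1 x hx y hy hne hsh hl
  · rcases hc with rfl | hadj
    · exact hsh ⟨v1, hv1, hv2⟩
    · have h3 : s(v1, v2) ∈ G8.edgeSet := (SimpleGraph.mem_edgeSet G8).mpr hadj
      have h2 := hf.2 x hx y hy hne hsh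
        ⟨s(v1, v2), h3, ⟨v1, hv1, Sym2.mem_mk_left _ _⟩, ⟨v2, hv2, Sym2.mem_mk_right _ _⟩⟩
      rw [le_abs] at h2
      omega

include hf in
lemma rule_adj {x y : Sym2 (ℤ×ℤ)} (hx : x ∈ G8.edgeSet) (hy : y ∈ G8.edgeSet)
    (hl : f x = f y + 1 ∨ f y = f x + 1) (hcl : Close x y) : ∃ v, v ∈ x ∧ v ∈ y := by
  by_contra hsh
  have hne : x ≠ y := by rintro rfl; omega
  rcases hcl with ⟨v1, hv1, v2, hv2, rfl | hadj⟩
  · exact hsh ⟨v1, hv1, hv2⟩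
  · have h3 : s(v1, v2) ∈ G8.edgeSet := (SimpleGraph.mem_edgeSet G8).mpr hadj
    have h2 := hf.2 x hx y hy hne hsh
      ⟨s(v1, v2), h3, ⟨v1, hv1, Sym2.mem_mk_left _ _⟩, ⟨v2, hv2, Sym2.mem_mk_right _ _⟩⟩
    rw [le_abs] at h2
    omega

end Rules

/-! ### Data tables -/

def hL : List ((ℤ×ℤ)×(ℤ×ℤ)) := [((-1,-1),(0,0)),((-1,0),(0,0)),((-1,0),(0,1)),((-1,1),(0,0)),((-1,1),(0,1)),((-1,2),(0,1)),((0,-1),(0,0)),((0,-1),(1,0)),((0,0),(0,1)),((0,0),(1,-1)),((0,0),(1,0)),((0,0),(1,1)),((0,1),(0,2)),((0,1),(1,0)),((0,1),(1,1)),((0,1),(1,2)),((0,2),(1,1)),((1,-1),(1,0)),((1,0),(1,1)),((1,0),(2,-1)),((1,0),(2,0)),((1,0),(2,1)),((1,1),(1,2)),((1,1),(2,0)),((1,1),(2,1)),((1,1),(2,2))]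
def outL : List ((ℤ×ℤ)×(ℤ×ℤ)) := [((-2,-2),(-1,-1)),((-2,-1),(-1,-1)),((-2,-1),(-1,0)),((-2,0),(-1,-1)),((-2,0),(-1,0)),((-2,0),(-1,1)),((-2,1),(-1,0)),((-2,1),(-1,1)),((-2,1),(-1,2)),((-2,2),(-1,1)),((-2,2),(-1,2)),((-2,3),(-1,2)),((-1,-2),(-1,-1)),((-1,-2),(0,-1)),((-1,-1),(-1,0)),((-1,-1),(0,-2)),((-1,-1),(0,-1)),((-1,0),(-1,1)),((-1,0),(0,-1)),((-1,1),(-1,2)),((-1,1),(0,2)),((-1,2),(-1,3)),((-1,2),(0,2)),((-1,2),(0,3)),((-1,3),(0,2)),((0,-2),(0,-1)),((0,-2),(1,-1)),((0,-1),(1,-2)),((0,-1),(1,-1)),((0,2),(0,3)),((0,2),(1,2)),((0,2),(1,3)),((0,3),(1,2)),((1,-2),(1,-1)),((1,-2),(2,-1)),((1,-1),(2,-2)),((1,-1),(2,-1)),((1,-1),(2,0)),((1,2),(1,3)),((1,2),(2,1)),((1,2),(2,2)),((1,2),(2,3)),((1,3),(2,2)),((2,-2),(2,-1)),((2,-1)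,(2,0)),((2,-1),(3,-2)),((2,-1),(3,-1)),((2,-1),(3,0)),((2,0),(2,1)),((2,0),(3,-1)),((2,0),(3,0)),((2,0),(3,1)),((2,1),(2,2)),((2,1),(3,0)),((2,1),(3,1)),((2,1),(3,2)),((2,2),(2,3)),((2,2),(3,1)),((2,2),(3,2)),((2,2),(3,3))]
def uL : List (ℤ×ℤ) := [(0,0),(1,0),(0,1),(1,1)]
def forkL : List ((ℤ×ℤ)×(ℤ×ℤ)) := [((0,0),(-1,0)),((0,0),(-1,-1)),((0,0),(0,-1)),((1,0),(2,0)),((1,0),(2,-1)),((1,0),(1,-1)),((0,1),(-1,1)),((0,1),(-1,2)),((0,1),(0,2)),((1,1),(2,1)),((1,1),(2,2)),((1,1),(1,2))]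
def c1L : List (List ℕ) := [[],[],[34,43,44,45,46,47,48,49,50,51,53],[32,38,39,40,41,42,48,52,53,54,55,56,57,58,59],[],[],[],[],[34,43,44,45,46,47,48,49,50,51,53],[10,11,21,22,23,24,29,30,31,32],[10,11,21,22,23,24,29,30,31,32],[10,11,21,23],[],[],[],[],[],[],[],[],[],[],[],[],[],[],[],[],[],[32,38,39,40,41,42,48,52,53,54,55,56,57,58,59],[],[],[],[],[34,43,44,45,46,47,48,49,50,51,53],[8,10,11,21,22,23,24,29,30,31,32],[8,10,11,21,22,23,24,29,30,31,32],[8,10,11,21,23],[],[],[],[],[],[],[],[],[],[],[],[],[],[],[],[],[],[32,38,39,40,41,42,48,52,53,54,55,56,57,58,59],[],[],[],[8,10,11,21,22,23,24,29,30,31,32],[42,48,51,52,53,54,55,56,57,58,59],[8,10,11,21,22,23,24,29,30,31,32],[8,10,11,21,22,23,24,29,30,31,32],[8,10,11,21,23],[],[],[],[],[],[],[],[],[],[],[],[],[],[],[],[],[],[],[],[],[],[5,7,8,9,10,11,19,20,21,22,23,24,29,30,31],[],[],[8,10,11,21,22,23,24,29,30,31,32],[],[],[0,1,3,12,15],[]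,[],[],[],[0,1,2,3,4,5,6,12,14,15,17],[],[],[0,1,2,3,4,5,6,12,14,15,17],[],[0,1,2,3,4,5,6,12,14,15,17],[],[],[],[],[],[],[],[],[],[5,7,8,9,10,11,19,20,21,22,23,24,29,30,31],[],[],[8,10,11,21,22,23,24,29,30,31,32],[],[],[0,1,3,12,15],[],[],[],[],[0,1,2,3,4,5,6,12,14,15,17],[],[],[0,1,2,3,4,5,6,12,14,15,17],[],[],[],[],[],[],[],[],[],[],[],[5,7,8,9,10,11,19,20,21,22,23,24,29,30,31],[],[8,10,11,21,22,23,24,29,30,31,32],[8,10,11,21,22,23,24,29,30,31,32],[],[],[0,1,3,12],[],[],[],[],[0,1,2,3,4,5,6,12,14,17],[],[],[0,1,2,3,4,5,6,12,14,17],[],[],[],[],[],[],[26,33,34,35,36,37,43,44,45,46,47,48,49,50,51],[34,43,44,45,46,47,48,49,50,51,53],[],[],[],[],[34,43,44,45,46,47,48,49,50,51,53],[],[],[],[],[0,1,12,15],[0,1,12,13,15,16,25,26,27,28],[0,1,12,13,15,16,25,26,27,28],[],[],[],[],[],[],[],[],[],[],[],[],[26,33,34,35,36,37,43,44,45,46,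47,48,49,50,51],[],[],[],[],[],[34,43,44,45,46,47,48,49,50,51,53],[],[],[],[],[0,1,3,12,15],[0,1,3,12,13,15,16,25,26,27,28],[0,1,3,12,13,15,16,25,26,27,28],[],[],[],[],[],[],[],[],[],[],[],[],[26,33,34,35,36,37,43,44,45,46,47,48,49,50,51],[],[],[],[],[],[34,43,44,45,46,47,48,49,50,51,53],[],[],[],[],[0,1,3,12,15],[0,1,3,12,13,15,16,25,26,27,28],[0,1,3,12,13,15,16,25,26,27,28],[0,1,3,12,13,15,16,25,26,27,28],[],[],[],[],[],[],[],[],[],[],[],[],[],[],[],[],[],[],[],[],[8,10,11,21,23],[],[],[0,1,3,12,13,15,16,25,26,27,28],[],[0,1,2,3,4,6,12,13,14,15,16,18,25,27,28],[],[0,1,2,3,4,5,6,12,14,15,17],[],[],[0,1,2,3,4,5,6,12,14,15,17],[],[0,1,2,3,4,6,12,13,14,15,16,17,18,25,27],[],[],[],[],[],[],[],[],[],[],[],[],[],[8,10,11,21,23],[],[],[0,1,3,12,13,15,16,25,26,27,28],[],[0,1,2,3,4,6,12,13,14,15,16,18,25,27,28],[],[0,1,2,3,4,5,6,12,14,15,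17],[],[],[],[],[0,1,2,3,4,6,12,13,14,15,16,17,18,25,27],[],[],[],[],[],[],[],[],[],[],[],[],[],[8,10,11,21],[],[],[0,1,3,12,13,15,16,25,26,27,28],[0,1,3,12,13,15,16,25,26,27,28],[0,1,2,3,4,6,12,13,14,15,16,18,25,27,28],[],[0,1,2,3,4,5,6,12,14,15,17],[],[],[],[],[0,1,2,3,4,6,12,13,14,15,16,17,18,25,27],[],[]]
def c2L : List (List ℕ) := [[],[],[42,52,54,55,56,57,58,59],[34,43,44,45,46,47,49,50,51],[],[],[],[],[42,52,54,55,56,57,58,59],[38,39,40,41,42,52,53,54,55,56,57,58,59],[38,40,41,42,56,57,58,59],[34,43,45,46,47],[],[],[],[],[],[],[],[],[],[],[],[],[],[],[],[],[],[34,43,44,45,46,47,49,50,51],[],[],[],[],[42,52,54,55,56,57,58,59],[38,39,40,41,42,52,53,54,55,56,57,58,59],[38,40,41,42,56,57,58,59],[34,43,45,46,47],[],[],[],[],[],[],[],[],[],[],[],[],[],[],[],[],[],[43,44,45,46,47,49,50,51],[],[],[],[38,40,41,42,56,57,58,59],[43,44,45,46,47,49,50],[38,39,40,41,42,52,53,5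4,55,56,57,58,59],[38,40,41,42,56,57,58,59],[43,45,46,47],[],[],[],[],[],[],[],[],[],[],[],[],[],[],[],[],[],[],[],[],[],[32,38,40,41,42,56,58,59],[],[],[38,40,41,42,56,58,59],[],[],[42,56,58,59],[],[],[],[],[7,8,9,10,11,19,21,23],[],[],[7,8,9,10,11,19,20,21,22,23,24,29,31],[],[7,8,9,10,11,19,21,23],[],[],[],[],[],[],[],[],[],[32,38,40,41,42,56,57,58,59],[],[],[38,40,41,42,56,57,58,59],[],[],[42,56,57,58,59],[],[],[],[],[7,8,9,10,11,19,21,23],[],[],[7,8,9,10,11,19,20,21,22,23,24,29,31],[],[],[],[],[],[],[],[],[],[],[],[32,38,40,41,42,56,57,58,59],[],[38,40,41,42,56,57,58,59],[38,40,41,42,56,57,58,59],[],[],[42,56,57,58,59],[],[],[],[],[7,8,9,10,11,19,21,23],[],[],[7,8,9,10,11,19,20,21,22,23,24,29,31],[],[],[],[],[],[],[42,52,53,54,55,56,57,58,59],[42,52,54,55,56,57,58,59],[],[],[],[],[42,52,54,55,56,57,58,59],[],[],[],[],[42,56,57,58,59],[33,34,35,36,43,45,46,47],[33,34,35,36,3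7,43,44,45,46,47,49,50,51],[],[],[],[],[],[],[],[],[],[],[],[],[42,52,53,54,55,56,57,58,59],[],[],[],[],[],[42,52,54,55,56,57,58,59],[],[],[],[],[42,56,57,58,59],[33,34,35,36,43,45,46,47],[33,34,35,36,37,43,44,45,46,47,49,50,51],[],[],[],[],[],[],[],[],[],[],[],[],[52,53,54,55,56,57,58,59],[],[],[],[],[],[52,54,55,56,57,58,59],[],[],[],[],[56,57,58,59],[33,34,35,36,43,45,46,47],[33,34,35,36,37,43,44,45,46,47,49,50,51],[33,34,35,36,43,45,46,47],[],[],[],[],[],[],[],[],[],[],[],[],[],[],[],[],[],[],[],[],[34,43,45,46],[],[],[33,34,35,36,43,45,46],[],[26,33,34,35,36,43,45,46],[],[7,8,9,10,11,19,21,23],[],[],[7,8,9,10,11,19,21,23],[],[5,7,8,9,10,11,19,21,23],[],[],[],[],[],[],[],[],[],[],[],[],[],[34,43,45,46,47],[],[],[33,34,35,36,43,45,46,47],[],[26,33,34,35,36,43,45,46,47],[],[7,8,9,10,11,19,21,23],[],[],[],[],[5,7,8,9,10,11,19,21,23],[],[],[],[],[],[],[],[],[],[],[],[],[],[34,43,4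5,46,47],[],[],[33,34,35,36,43,45,46,47],[33,34,35,36,43,45,46,47],[26,33,34,35,36,43,45,46,47],[],[7,8,9,10,11,19,21],[],[],[],[],[5,7,8,9,10,11,19,21],[],[]]


def hPn (n : ℕ) : (ℤ×ℤ)×(ℤ×ℤ) := hL.getD n ((0,0),(0,0))
def outPn (n : ℕ) : (ℤ×ℤ)×(ℤ×ℤ) := outL.getD n ((0,0),(0,0))
def forkPn (n : ℕ) : (ℤ×ℤ)×(ℤ×ℤ) := forkL.getD n ((0,0),(0,0))
def allL : List ((ℤ×ℤ)×(ℤ×ℤ)) := hL ++ outL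
def allPn (n : ℕ) : (ℤ×ℤ)×(ℤ×ℤ) := allL.getD n ((0,0),(0,0))

abbrev hE (j : Fin 26) : Sym2 (ℤ×ℤ) := pe (hPn j.1)
abbrev outE (i : Fin 60) : Sym2 (ℤ×ℤ) := pe (outPn i.1)
abbrev allE (i : Fin 86) : Sym2 (ℤ×ℤ) := pe (allPn i.1)
abbrev fEt (t : Fin 12) : Sym2 (ℤ×ℤ) := pe (forkPn t.1)
abbrev fE3 (t : Fin 12) (k : ℕ) : Sym2 (ℤ×ℤ) := pe (forkPn ((t.1/3)*3 + k))
abbrev uQ (t : Fin 12) : ℤ×ℤ := uL.getD (t.1/3) (0,0)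
abbrev fQ (q : Fin 4) (r : ℕ) : Sym2 (ℤ×ℤ) := pe (forkPn (q.1*3 + r))
abbrev uv (q : Fin 4) : ℤ×ℤ := uL.getD q.1 (0,0)
def c1 (t : Fin 12) (j : Fin 26) : List ℕ := c1L.getD (t.1*26 + j.1) []
def c2 (t : Fin 12) (j : Fin 26) : List ℕ := c2L.getD (t.1*26 + j.1) []

/-! ### Characterization of the edges -/

set_option maxRecDepth 100000 in
lemma mem_all1 (a b : ℤ×ℤ) (h : AdjP a b) (h4 : InB4 a) :
    ∃ i : Fin 86, s(a, b) = allE i := by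
  obtain ⟨a1, a2⟩ := a; obtain ⟨b1, b2⟩ := b
  obtain ⟨hne, k1, k2, k3, k4, -⟩ := h
  obtain ⟨m1, m2, m3, m4⟩ := h4
  simp only at hne k1 k2 k3 k4 m1 m2 m3 m4
  have hb1l : (-2:ℤ) ≤ b1 := by omega
  have hb1u : b1 ≤ (3:ℤ) := by omega
  have hb2l : (-2:ℤ) ≤ b2 := by omega
  have hb2u : b2 ≤ (3:ℤ) := by omega
  interval_cases a1 <;> interval_cases a2 <;> interval_cases b1 <;> interval_cases b2 <;>
    first
      | exact absurd rfl hne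
      | (exfalso; omega)
      | decide

lemma mem_all (a b : ℤ×ℤ) (h : AdjP a b) : ∃ i : Fin 86, s(a, b) = allE i := by
  rcases h.2.2.2.2.2 with h4 | h4
  · exact mem_all1 a b h h4
  · obtain ⟨i, hi⟩ := mem_all1 b a (adjP_symm h) h4
    exact ⟨i, by rw [Sym2.eq_swap]; exact hi⟩

set_option maxRecDepth 100000 in
lemma lemAllH : ∀ i : Fin 86, (BP (allPn i.1).1 ∨ BP (allPn i.1).2) →
    ∃ j : Fin 26, allE i = hE j := by decide

set_option maxRecDepth 100000 in
lemma lemAllO : ∀ i : Fin 86, ¬(BP (allPn i.1).1 ∨ BP (allPn i.1).2) →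
    ∃ j : Fin 60, allE i = outE j := by decide

lemma hIndex (x : Sym2 (ℤ×ℤ)) (hx : x ∈ HEdges) : ∃ j : Fin 26, x = hE j := by
  induction x using Sym2.ind with
  | _ a b =>
    obtain ⟨hxe, hB⟩ := hx
    rw [SimpleGraph.mem_edgeSet, adjP_iff] at hxe
    rw [memB_iff] at hB
    obtain ⟨i, hi⟩ := mem_all a b hxe
    have hB2 : BP (allPn i.1).1 ∨ BP (allPn i.1).2 := by
      have hB' : ∃ u ∈ allE i, u ∈ BVerts := hi ▸ ((memB_iff a b).mpr hB)
      exact (memB_iff (allPn i.1).1 (allPn i.1).2).mp hB'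
    obtain ⟨j, hj⟩ := lemAllH i hB2
    exact ⟨j, hi.trans hj⟩

lemma outIndex (x : Sym2 (ℤ×ℤ)) (hx : x ∈ G8.edgeSet) (hnH : x ∉ HEdges) :
    ∃ i : Fin 60, x = outE i := by
  induction x using Sym2.ind with
  | _ a b =>
    rw [SimpleGraph.mem_edgeSet] at hx
    have hxe : AdjP a b := (adjP_iff a b).mp hx
    have hB : ¬ (BP a ∨ BP b) := fun hb =>
      hnH ⟨(SimpleGraph.mem_edgeSet G8).mpr hx, (memB_iff a b).mpr hb⟩
    obtain ⟨i, hi⟩ := mem_all a b hxe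
    have hB2 : ¬ (BP (allPn i.1).1 ∨ BP (allPn i.1).2) := by
      intro hb
      apply hB
      apply (memB_iff a b).mp
      rw [hi]
      exact (memB_iff (allPn i.1).1 (allPn i.1).2).mpr hb
    obtain ⟨j, hj⟩ := lemAllO i hB2
    exact ⟨j, hi.trans hj⟩

/-! ### Certified geometric facts (by `decide`) -/

def NotFork (t : Fin 12) (j : Fin 26) : Prop :=
  ¬ (hE j = fE3 t 0 ∨ hE j = fE3 t 1 ∨ hE j = fE3 t 2)

instance (t : Fin 12) (j : Fin 26) : Decidable (NotFork t j) := by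
  unfold NotFork; infer_instance

set_option maxRecDepth 1000000 in
lemma lemA : ∀ t : Fin 12, ∀ j : Fin 26, NotFork t j →
    ¬ D2P (hPn j.1) (forkPn t.1) →
    ∀ i : Fin 60, ¬ CloseP (outPn i.1) (forkPn t.1) →
      ¬ D2P (outPn i.1) (hPn j.1) → (i.1 ∈ c1 t j ∨ i.1 ∈ c2 t j) := by decide

set_option maxRecDepth 1000000 in
lemma lemB1 : ∀ t : Fin 12, ∀ j : Fin 26, ∀ a ∈ c1 t j, ∀ b ∈ c1 t j,
    CloseP (outPn a) (outPn b) := by decide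

set_option maxRecDepth 1000000 in
lemma lemB2 : ∀ t : Fin 12, ∀ j : Fin 26, ∀ a ∈ c2 t j, ∀ b ∈ c2 t j,
    CloseP (outPn a) (outPn b) := by decide

lemma forkHP : ∀ t : Fin 12, HP (forkPn t.1) := by decide

/-! ### Fork membership -/

lemma mem_fork_iff (u : ℤ×ℤ) (x : Sym2 (ℤ×ℤ)) :
    x ∈ Fork u ↔ (x = s(u, (3*u.1-1, u.2)) ∨ x = s(u, (3*u.1-1, 3*u.2-1)) ∨
      x = s(u, (u.1, 3*u.2-1))) := by
  simp [Fork]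

set_option maxRecDepth 100000 in
lemma forkConv : ∀ t : Fin 12,
    s(uQ t, (3*(uQ t).1-1, (uQ t).2)) = fE3 t 0 ∧
    s(uQ t, (3*(uQ t).1-1, 3*(uQ t).2-1)) = fE3 t 1 ∧
    s(uQ t, ((uQ t).1, 3*(uQ t).2-1)) = fE3 t 2 := by decide

lemma mem_fork_iff' (t : Fin 12) (x : Sym2 (ℤ×ℤ)) :
    x ∈ Fork (uQ t) ↔ (x = fE3 t 0 ∨ x = fE3 t 1 ∨ x = fE3 t 2) := by
  rw [mem_fork_iff, (forkConv t).1, (forkConv t).2.1, (forkConv t).2.2]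

/-! ### The key lemma -/

lemma key {f : Sym2 (ℤ×ℤ) → ℕ} (hf : IsL12 G8 f) (t : Fin 12)
    (T : ThriceOutside f (f (fEt t))) {h : Sym2 (ℤ×ℤ)} (hh : h ∈ HEdges)
    (hrel : f h = f (fEt t) + 1 ∨ f (fEt t) = f h + 1) : h ∈ Fork (uQ t) := by
  by_contra hnf
  obtain ⟨j, rfl⟩ := hIndex h hh
  obtain ⟨o1, o2, o3, m1, m2, m3, n12, n13, n23, l1, l2, l3⟩ := T
  obtain ⟨i1, rfl⟩ := outIndex o1 m1.1 m1.2
  obtain ⟨i2, rfl⟩ := outIndex o2 m2.1 m2.2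
  obtain ⟨i3, rfl⟩ := outIndex o3 m3.1 m3.2
  have het : fEt t ∈ HEdges := (mem_HEdges_iff _ _).mpr (forkHP t)
  have heE : fEt t ∈ G8.edgeSet := het.1
  have hjE : hE j ∈ G8.edgeSet := hh.1
  have c12 : ¬ CloseP (outPn i1.1) (outPn i2.1) := fun hc =>
    rule_eq hf m1.1 m2.1 n12 (l1.trans l2.symm) ((closeP_iff _ _).mpr hc)
  have c13 : ¬ CloseP (outPn i1.1) (outPn i3.1) := fun hc =>
    rule_eq hf m1.1 m3.1 n13 (l1.trans l3.symm) ((closeP_iff _ _).mpr hc)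
  have c23 : ¬ CloseP (outPn i2.1) (outPn i3.1) := fun hc =>
    rule_eq hf m2.1 m3.1 n23 (l2.trans l3.symm) ((closeP_iff _ _).mpr hc)
  have ce1 : ¬ CloseP (outPn i1.1) (forkPn t.1) := fun hc =>
    rule_eq hf m1.1 heE (fun he => m1.2 (he ▸ het)) l1 ((closeP_iff _ _).mpr hc)
  have ce2 : ¬ CloseP (outPn i2.1) (forkPn t.1) := fun hc =>
    rule_eq hf m2.1 heE (fun he => m2.2 (he ▸ het)) l2 ((closeP_iff _ _).mpr hc)
  have ce3 : ¬ CloseP (outPn i3.1) (forkPn t.1) := fun hc =>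
    rule_eq hf m3.1 heE (fun he => m3.2 (he ▸ het)) l3 ((closeP_iff _ _).mpr hc)
  have hd2he : ¬ D2P (hPn j.1) (forkPn t.1) := by
    rintro ⟨hc, hs⟩
    exact hs ((shareP_iff _ _).mp (rule_adj hf hjE heE hrel ((closeP_iff _ _).mpr hc)))
  have hd2oh : ∀ (i : Fin 60), f (outE i) = f (fEt t) →
      ¬ (outE i) ∈ HEdges → (outE i) ∈ G8.edgeSet → ¬ D2P (outPn i.1) (hPn j.1) := by
    rintro i li _ hiE ⟨hc, hs⟩
    have hrel' : f (outE i) = f (hE j) + 1 ∨ f (hE j) = f (outE i) + 1 := by omega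
    exact hs ((shareP_iff _ _).mp (rule_adj hf hiE hjE hrel' ((closeP_iff _ _).mpr hc)))
  have hNF : NotFork t j := by
    intro hor
    exact hnf ((mem_fork_iff' t (hE j)).mpr hor)
  have M1 := lemA t j hNF hd2he i1 ce1 (hd2oh i1 l1 m1.2 m1.1)
  have M2 := lemA t j hNF hd2he i2 ce2 (hd2oh i2 l2 m2.2 m2.1)
  have M3 := lemA t j hNF hd2he i3 ce3 (hd2oh i3 l3 m3.2 m3.1)
  rcases M1 with A1 | A1 <;> rcases M2 with A2 | A2 <;> rcases M3 with A3 | A3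
  · exact c12 (lemB1 t j _ A1 _ A2)
  · exact c12 (lemB1 t j _ A1 _ A2)
  · exact c13 (lemB1 t j _ A1 _ A3)
  · exact c23 (lemB2 t j _ A2 _ A3)
  · exact c23 (lemB1 t j _ A2 _ A3)
  · exact c13 (lemB2 t j _ A1 _ A3)
  · exact c12 (lemB2 t j _ A1 _ A2)
  · exact c12 (lemB2 t j _ A1 _ A2)

/-! ### Label arithmetic -/

lemma idx_eq : ∀ q : Fin 4, ∀ r : Fin 3, ∀ k : ℕ, k < 3 →
    ((((q.1*3+r.1) : ℕ)/3)*3 + k) = q.1*3 + k := by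
  rintro ⟨qv, hq⟩ ⟨rv, hr⟩ k hk
  simp only
  omega

lemma pairCore {f : Sym2 (ℤ×ℤ) → ℕ} (hf : IsL12 G8 f)
    (hdist : ∀ e1 ∈ HEdges, ∀ e2 ∈ HEdges, f e1 = f e2 → e1 = e2)
    (hrange : f '' HEdges = Set.Iic 25)
    (q : Fin 4) (r1 r2 : ℕ) (hr1 : r1 < 3) (hr2 : r2 < 3) (hne : r1 ≠ r2)
    (T1 : ThriceOutside f (f (fQ q r1))) (T2 : ThriceOutside f (f (fQ q r2))) :
    (f (fQ q r1) = f (fQ q r2) + 1 ∨ f (fQ q r2) = f (fQ q r1) + 1) ∧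
    (f (fQ q r1) = 0 ∨ f (fQ q r1) = 25 ∨ f (fQ q r2) = 0 ∨ f (fQ q r2) = 25) := by
  have hFk : ∀ r : ℕ, r < 3 → fQ q r ∈ HEdges := by
    intro r hr
    have : HP (forkPn (q.1*3 + r)) := by
      have : ∀ t : Fin 12, HP (forkPn t.1) := forkHP
      exact this ⟨q.1*3+r, by omega⟩
    exact (mem_HEdges_iff _ _).mpr this
  have hle : ∀ r : ℕ, r < 3 → f (fQ q r) ≤ 25 := by
    intro r hr
    have h1 : f (fQ q r) ∈ f '' HEdges := ⟨_, hFk r hr, rfl⟩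
    rw [hrange] at h1
    exact h1
  have hinj : ∀ r r' : ℕ, r < 3 → r' < 3 → r ≠ r' → fQ q r ≠ fQ q r' := by
    have H : ∀ q : Fin 4, ∀ r : Fin 3, ∀ r' : Fin 3, r ≠ r' →
        pe (forkPn (q.1*3 + r.1)) ≠ pe (forkPn (q.1*3 + r'.1)) := by decide
    intro r r' hr hr' hrr
    exact H q ⟨r, hr⟩ ⟨r', hr'⟩ (by simp [Fin.ext_iff]; omega)
  have hlinj : ∀ r r' : ℕ, r < 3 → r' < 3 → r ≠ r' → f (fQ q r) ≠ f (fQ q r') :=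
    fun r r' hr hr' hrr hl => (hinj r r' hr hr' hrr) (hdist _ (hFk r hr) _ (hFk r' hr') hl)
  have hK : ∀ r : ℕ, r < 3 → ThriceOutside f (f (fQ q r)) → ∀ m : ℕ, m ≤ 25 →
      (m = f (fQ q r) + 1 ∨ f (fQ q r) = m + 1) →
      (m = f (fQ q 0) ∨ m = f (fQ q 1) ∨ m = f (fQ q 2)) := by
    intro r hr T m hm hrel
    have hmem : m ∈ Set.Iic 25 := hm
    rw [← hrange] at hmem
    obtain ⟨h, hh, hfh⟩ := hmem
    set t : Fin 12 := ⟨q.1*3 + r, by omega⟩ with ht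
    have hk := key hf t T hh (by
      show f h = f (fQ q r) + 1 ∨ f (fQ q r) = f h + 1
      rw [hfh]; omega)
    rw [mem_fork_iff' t h] at hk
    have e0 : fE3 t 0 = fQ q 0 := by
      show pe (forkPn ((t.1/3)*3 + 0)) = pe (forkPn (q.1*3 + 0))
      rw [idx_eq q ⟨r, hr⟩ 0 (by omega)]
    have e1 : fE3 t 1 = fQ q 1 := by
      show pe (forkPn ((t.1/3)*3 + 1)) = pe (forkPn (q.1*3 + 1))
      rw [idx_eq q ⟨r, hr⟩ 1 (by omega)]
    have e2 : fE3 t 2 = fQ q 2 := by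
      show pe (forkPn ((t.1/3)*3 + 2)) = pe (forkPn (q.1*3 + 2))
      rw [idx_eq q ⟨r, hr⟩ 2 (by omega)]
    rcases hk with hk | hk | hk
    · exact Or.inl (by rw [← hfh, hk, e0])
    · exact Or.inr (Or.inl (by rw [← hfh, hk, e1]))
    · exact Or.inr (Or.inr (by rw [← hfh, hk, e2]))
  have K1 := hK r1 hr1 T1
  have K2 := hK r2 hr2 T2
  have I1p : f (fQ q r1) + 1 ≤ 25 →
      (f (fQ q r1) + 1 = f (fQ q 0) ∨ f (fQ q r1) + 1 = f (fQ q 1) ∨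
       f (fQ q r1) + 1 = f (fQ q 2)) :=
    fun h => K1 (f (fQ q r1) + 1) h (Or.inl rfl)
  have I1m : 1 ≤ f (fQ q r1) →
      (f (fQ q r1) - 1 = f (fQ q 0) ∨ f (fQ q r1) - 1 = f (fQ q 1) ∨
       f (fQ q r1) - 1 = f (fQ q 2)) :=
    fun h => K1 (f (fQ q r1) - 1) (by have := hle r1 hr1; omega) (Or.inr (by omega))
  have I2p : f (fQ q r2) + 1 ≤ 25 →
      (f (fQ q r2) + 1 = f (fQ q 0) ∨ f (fQ q r2) + 1 = f (fQ q 1) ∨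
       f (fQ q r2) + 1 = f (fQ q 2)) :=
    fun h => K2 (f (fQ q r2) + 1) h (Or.inl rfl)
  have I2m : 1 ≤ f (fQ q r2) →
      (f (fQ q r2) - 1 = f (fQ q 0) ∨ f (fQ q r2) - 1 = f (fQ q 1) ∨
       f (fQ q r2) - 1 = f (fQ q 2)) :=
    fun h => K2 (f (fQ q r2) - 1) (by have := hle r2 hr2; omega) (Or.inr (by omega))
  have d01 := hlinj 0 1 (by omega) (by omega) (by omega)
  have d02 := hlinj 0 2 (by omega) (by omega) (by omega)
  have d12 := hlinj 1 2 (by omega) (by omega) (by omega)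
  have b0 := hle 0 (by omega)
  have b1 := hle 1 (by omega)
  have b2 := hle 2 (by omega)
  interval_cases r1 <;> interval_cases r2 <;> first | exact absurd rfl hne | omega

/-! ### Putting everything together -/

set_option maxRecDepth 100000 in
lemma uvConv : ∀ q : Fin 4,
    s(uv q, (3*(uv q).1-1, (uv q).2)) = fQ q 0 ∧
    s(uv q, (3*(uv q).1-1, 3*(uv q).2-1)) = fQ q 1 ∧
    s(uv q, ((uv q).1, 3*(uv q).2-1)) = fQ q 2 := by decide

lemma mem_fork_uv (q : Fin 4) (x : Sym2 (ℤ×ℤ)) :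
    x ∈ Fork (uv q) ↔ (x = fQ q 0 ∨ x = fQ q 1 ∨ x = fQ q 2) := by
  rw [mem_fork_iff, (uvConv q).1, (uvConv q).2.1, (uvConv q).2.2]

lemma main {f : Sym2 (ℤ×ℤ) → ℕ} (hf : IsL12 G8 f)
    (hdist : ∀ e1 ∈ HEdges, ∀ e2 ∈ HEdges, f e1 = f e2 → e1 = e2)
    (hrange : f '' HEdges = Set.Iic 25) (q : Fin 4) :
    (¬ ∀ e ∈ Fork (uv q), ThriceOutside f (f e)) ∧
    (∀ e1 ∈ Fork (uv q), ∀ e2 ∈ Fork (uv q), e1 ≠ e2 →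
      ThriceOutside f (f e1) → ThriceOutside f (f e2) →
      (f e1 = f e2 + 1 ∨ f e2 = f e1 + 1) ∧
      (f e1 = 0 ∨ f e1 = 25 ∨ f e2 = 0 ∨ f e2 = 25)) := by
  have hmem : ∀ r : ℕ, r < 3 → fQ q r ∈ Fork (uv q) := by
    intro r hr
    rw [mem_fork_uv]
    interval_cases r
    · exact Or.inl rfl
    · exact Or.inr (Or.inl rfl)
    · exact Or.inr (Or.inr rfl)
  constructor
  · intro hall
    have P01 := pairCore hf hdist hrange q 0 1 (by omega) (by omega) (by omega)
      (hall _ (hmem 0 (by omega))) (hall _ (hmem 1 (by omega)))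
    have P02 := pairCore hf hdist hrange q 0 2 (by omega) (by omega) (by omega)
      (hall _ (hmem 0 (by omega))) (hall _ (hmem 2 (by omega)))
    have P12 := pairCore hf hdist hrange q 1 2 (by omega) (by omega) (by omega)
      (hall _ (hmem 1 (by omega))) (hall _ (hmem 2 (by omega)))
    have h01 := P01.1
    have h02 := P02.1
    have h12 := P12.1
    omega
  · intro e1 he1 e2 he2 hne T1 T2
    rw [mem_fork_uv] at he1 he2
    rcases he1 with rfl | rfl | rfl <;> rcases he2 with rfl | rfl | rfl <;>
      first
        | exact absurd rfl hne
        | exact pairCore hf hdist hrange q 0 1 (by omega) (by omega) (by omega) T1 T2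
        | exact pairCore hf hdist hrange q 0 2 (by omega) (by omega) (by omega) T1 T2
        | exact pairCore hf hdist hrange q 1 2 (by omega) (by omega) (by omega) T1 T2
        | exact pairCore hf hdist hrange q 1 0 (by omega) (by omega) (by omega) T1 T2
        | exact pairCore hf hdist hrange q 2 0 (by omega) (by omega) (by omega) T1 T2
        | exact pairCore hf hdist hrange q 2 1 (by omega) (by omega) (by omega) T1 T2

end Aux

/-- Suppose the 26 edges of `H` get pairwise distinct labels forming exactly
`{0,...,25}`. Then for each fork `F_u`, at most two of the three labels used on
`F_u` are each reused thrice outside `H`; moreover if two of them are, then these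
two labels are consecutive and one of them is `0` or `25`. -/
theorem fork_at_most_two_thrice (f : Sym2 (ℤ × ℤ) → ℕ) (hf : IsL12 G8 f)
    (hdist : ∀ e1 ∈ HEdges, ∀ e2 ∈ HEdges, f e1 = f e2 → e1 = e2)
    (hrange : f '' HEdges = Set.Iic 25) :
    ∀ u ∈ BVerts,
      (¬ ∀ e ∈ Fork u, ThriceOutside f (f e)) ∧
      (∀ e1 ∈ Fork u, ∀ e2 ∈ Fork u, e1 ≠ e2 →
        ThriceOutside f (f e1) → ThriceOutside f (f e2) →
        (f e1 = f e2 + 1 ∨ f e2 = f e1 + 1) ∧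
        (f e1 = 0 ∨ f e1 = 25 ∨ f e2 = 0 ∨ f e2 = 25)) := by
  intro u hu
  have hu' : u = ((0:ℤ),(0:ℤ)) ∨ u = (1,0) ∨ u = (0,1) ∨ u = (1,1) := by
    simpa [BVerts] using hu
  rcases hu' with rfl | rfl | rfl | rfl
  exacts [main hf hdist hrange 0, main hf hdist hrange 1,
          main hf hdist hrange 2, main hf hdist hrange 3]
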